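/- The 2n×2n matrix-valued function S(t) = [[−(6/t³) I, (3/t²) I],[(3/t²) I, −(2/t) I]] (in n×n blocks), defined for t > 0, solves the matrix Riccati equation S'(t) = S(t)C + Cᵀ S(t) + S(t) D S(t), and S(t)⁻¹ → 0 as t → 0⁺. (This is the case K = 0 of the explicit-solution lemma, with s₀(t) = t⁴, s₁(t) = 12t, s₂(t) = 6t² in the normalization S = ½[[−(s₁/s₀)I, (s₂/s₀)I],[(s₂/s₀)I, −(s₀'/s₀)I]].) -/

import Mathlib

noncomputable section
open Real Set Matrix Filter

/-- The `2n × 2n` matrix `C = [[0, −I], [0, 0]]` in `n × n` block form. -/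
def Cmat (n : ℕ) : Matrix (Fin n ⊕ Fin n) (Fin n ⊕ Fin n) ℝ :=
  Matrix.fromBlocks 0 (-1) 0 0

/-- The `2n × 2n` matrix `D = [[0, 0], [0, 2I]]` in `n × n` block form. -/
def Dmat (n : ℕ) : Matrix (Fin n ⊕ Fin n) (Fin n ⊕ Fin n) ℝ :=
  Matrix.fromBlocks 0 0 0 ((2 : ℝ) • 1)

/-- The block-diagonal matrix `[[a·I, 0], [0, b·I]]`. -/
def blockDiag (n : ℕ) (a b : ℝ) : Matrix (Fin n ⊕ Fin n) (Fin n ⊕ Fin n) ℝ :=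
  Matrix.fromBlocks (a • 1) 0 0 (b • 1)

/-- The matrix `½·[[-(s₁/s₀)I, (s₂/s₀)I], [(s₂/s₀)I, -(s₀'/s₀)I]]`. -/
def harnackMatrix (n : ℕ) (s₀ s₁ s₂ : ℝ → ℝ) (t : ℝ) :
    Matrix (Fin n ⊕ Fin n) (Fin n ⊕ Fin n) ℝ :=
  (1/2 : ℝ) • Matrix.fromBlocks (-(s₁ t / s₀ t) • 1) ((s₂ t / s₀ t) • 1)
    ((s₂ t / s₀ t) • 1) (-(deriv s₀ t / s₀ t) • 1)

/-- The explicit matrix `S(t) = [[−(6/t³)I, (3/t²)I], [(3/t²)I, −(2/t)I]]`. -/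
def Skolm (n : ℕ) (t : ℝ) : Matrix (Fin n ⊕ Fin n) (Fin n ⊕ Fin n) ℝ :=
  Matrix.fromBlocks (-(6 / t ^ 3) • 1) ((3 / t ^ 2) • 1) ((3 / t ^ 2) • 1) (-(2 / t) • 1)

/-- Auxiliary: the explicit inverse of `Skolm`. -/
def SkolmInv (n : ℕ) (t : ℝ) : Matrix (Fin n ⊕ Fin n) (Fin n ⊕ Fin n) ℝ :=
  Matrix.fromBlocks ((-2 / 3 * t ^ 3) • 1) ((-t ^ 2) • 1) ((-t ^ 2) • 1) ((-2 * t) • 1)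

lemma riccati_rhs_eq (n : ℕ) {t : ℝ} (ht : 0 < t) :
    Skolm n t * Cmat n + (Cmat n)ᵀ * Skolm n t + Skolm n t * Dmat n * Skolm n t
      = Matrix.fromBlocks ((18 / t ^ 4) • 1) ((-6 / t ^ 3) • 1) ((-6 / t ^ 3) • 1)
        ((2 / t ^ 2) • 1) := by
  have ht' := ht.ne'
  simp only [Skolm, Cmat, Dmat, Matrix.fromBlocks_multiply, Matrix.fromBlocks_add,
    Matrix.fromBlocks_transpose, Matrix.transpose_zero, Matrix.transpose_neg,
    Matrix.transpose_one, Matrix.smul_mul, Matrix.mul_smul, Matrix.mul_one, Matrix.one_mul,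
    Matrix.mul_zero, Matrix.zero_mul, Matrix.mul_neg, Matrix.neg_mul, smul_smul,
    add_zero, zero_add, smul_zero, smul_neg, neg_smul, neg_neg, neg_zero]
  ext i j
  rcases i with i | i <;> rcases j with j | j <;>
    simp only [Matrix.fromBlocks_apply₁₁, Matrix.fromBlocks_apply₁₂,
      Matrix.fromBlocks_apply₂₁, Matrix.fromBlocks_apply₂₂, Matrix.add_apply,
      Matrix.neg_apply, Matrix.smul_apply, Matrix.one_apply, smul_eq_mul,
      mul_ite, mul_one, mul_zero] <;>
    split_ifs <;> field_simp <;> ring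

lemma skolm_mul_inv (n : ℕ) {t : ℝ} (ht : 0 < t) : Skolm n t * SkolmInv n t = 1 := by
  have ht' := ht.ne'
  rw [← Matrix.fromBlocks_one]
  simp only [Skolm, SkolmInv, Matrix.fromBlocks_multiply, Matrix.smul_mul, Matrix.mul_smul,
    Matrix.mul_one, smul_smul]
  ext i j
  rcases i with i | i <;> rcases j with j | j <;>
    simp only [Matrix.fromBlocks_apply₁₁, Matrix.fromBlocks_apply₁₂,
      Matrix.fromBlocks_apply₂₁, Matrix.fromBlocks_apply₂₂, Matrix.add_apply,
      Matrix.smul_apply, Matrix.one_apply, Matrix.zero_apply, smul_eq_mul,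
      mul_ite, mul_one, mul_zero] <;>
    split_ifs <;> field_simp <;> ring

lemma skolm_inv_eq (n : ℕ) {t : ℝ} (ht : 0 < t) : (Skolm n t)⁻¹ = SkolmInv n t :=
  Matrix.inv_eq_right_inv (skolm_mul_inv n ht)

lemma deriv_aux1 {t : ℝ} (ht : 0 < t) :
    HasDerivAt (fun τ : ℝ => -(6 / τ ^ 3)) (18 / t ^ 4) t := by
  have h := ((hasDerivAt_const t (6 : ℝ)).div (hasDerivAt_pow 3 t)
    (pow_ne_zero 3 ht.ne')).neg
  convert h using 1
  · rfl
  · rfl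
  · funext τ; simp
  · field_simp
    ring

lemma deriv_aux2 {t : ℝ} (ht : 0 < t) :
    HasDerivAt (fun τ : ℝ => 3 / τ ^ 2) (-6 / t ^ 3) t := by
  have h := (hasDerivAt_const t (3 : ℝ)).div (hasDerivAt_pow 2 t) (pow_ne_zero 2 ht.ne')
  convert h using 1
  · rfl
  · rfl
  · funext τ; simp
  · field_simp
    ring

lemma deriv_aux3 {t : ℝ} (ht : 0 < t) :
    HasDerivAt (fun τ : ℝ => -(2 / τ)) (2 / t ^ 2) t := by
  have h := ((hasDerivAt_const t (2 : ℝ)).div (hasDerivAt_id t) ht.ne').neg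
  convert h using 1
  · rfl
  · rfl
  · funext τ; simp
  · simp only [id]
    field_simp
    ring

/-- **Explicit solution of the Riccati equation, case `K = 0`** (Lemma 3.3 (5)):
`S(t) = [[−(6/t³)I, (3/t²)I], [(3/t²)I, −(2/t)I]]` solves `S' = SC + CᵀS + SDS` for `t > 0`
and `S(t)⁻¹ → 0` as `t → 0⁺`. -/
theorem riccati_explicit_case5 (n : ℕ) (hn : 1 ≤ n) :
    (∀ t : ℝ, 0 < t →
      ∀ i j, HasDerivAt (fun τ => Skolm n τ i j)
        ((Skolm n t * Cmat n + (Cmat n)ᵀ * Skolm n t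
          + Skolm n t * Dmat n * Skolm n t) i j) t) ∧
    (∀ i j, Tendsto (fun t => (Skolm n t)⁻¹ i j) (nhdsWithin 0 (Ioi 0)) (nhds 0)) := by
  constructor
  · intro t ht i j
    rw [riccati_rhs_eq n ht]
    rcases i with i | i <;> rcases j with j | j <;>
      simp only [Skolm, Matrix.fromBlocks_apply₁₁, Matrix.fromBlocks_apply₁₂,
        Matrix.fromBlocks_apply₂₁, Matrix.fromBlocks_apply₂₂, Matrix.smul_apply,
        smul_eq_mul]
    · exact (deriv_aux1 ht).mul_const _
    · exact (deriv_aux2 ht).mul_const _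
    · exact (deriv_aux2 ht).mul_const _
    · exact (deriv_aux3 ht).mul_const _
  · intro i j
    have heq : (fun t => (Skolm n t)⁻¹ i j) =ᶠ[nhdsWithin (0 : ℝ) (Ioi 0)]
        (fun t => SkolmInv n t i j) := by
      filter_upwards [self_mem_nhdsWithin] with t ht
      rw [skolm_inv_eq n ht]
    refine Tendsto.congr' heq.symm ?_
    have hc : Continuous (fun t : ℝ => SkolmInv n t i j) := by
      rcases i with i | i <;> rcases j with j | j <;>
        simp only [SkolmInv, Matrix.fromBlocks_apply₁₁, Matrix.fromBlocks_apply₁₂,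
          Matrix.fromBlocks_apply₂₁, Matrix.fromBlocks_apply₂₂, Matrix.smul_apply,
          smul_eq_mul] <;> fun_prop
    have h0 : SkolmInv n 0 i j = 0 := by
      rcases i with i | i <;> rcases j with j | j <;>
        simp [SkolmInv]
    have := (hc.tendsto 0).mono_left (nhdsWithin_le_nhds (s := Ioi (0:ℝ)))
    rwa [h0] at this
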